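/- Let T > 0 and let R, L : (0,T) → ℝ be twice differentiable with R(t) > 0 and R'(t)² + L'(t)² = 1 for all t ∈ (0,T), and with L'(t) → 0 as t → 0⁺. Let b₁₁ ∈ L¹((0,T)) and let b₂₂ : (0,T) → ℝ be such that the function t ↦ b₂₂(t)/R(t) is differentiable at every t ∈ (0,T) with derivative (b₂₂/R)'(t) = R'(t)·b₁₁(t), and suppose that b₁₁(t)·R(t)·L'(t) = (L'(t)R''(t) − R'(t)L''(t))·b₂₂(t) for almost every t ∈ (0,T). Then (R'(t)L''(t) − L'(t)R''(t))·b₁₁(t) + L'(t)·b₂₂(t)/R(t)³ = 0 for almost every t ∈ (0,T). -/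

import Mathlib

open Set MeasureTheory Filter
open scoped Interval

open Metric in
/-- At almost every point of the zero set of a differentiable function, the derivative
vanishes. -/
lemma levelset_null {F : ℝ → ℝ} {U : Set ℝ}
    (hF : ∀ t ∈ U, DifferentiableAt ℝ F t) (hFm : Measurable F) :
    volume {t | t ∈ U ∧ F t = 0 ∧ deriv F t ≠ 0} = 0 := by
  set Z : Set ℝ := U ∩ F ⁻¹' {0} with hZdef
  have hZ : MeasurableSet (F ⁻¹' {0}) := hFm (measurableSet_singleton 0)
  set B : Set ℝ := {t | t ∈ U ∧ F t = 0 ∧ deriv F t ≠ 0} with hBdef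
  have hBZ : B ⊆ F ⁻¹' {0} := fun t ht => ht.2.1
  have hbes := Besicovitch.ae_tendsto_measure_inter_div volume (F ⁻¹' {0})
  have hBbad : B ⊆ {x | ¬ Tendsto
      (fun r => volume (F ⁻¹' {0} ∩ closedBall x r) / volume (closedBall x r))
      (nhdsWithin 0 (Ioi 0)) (nhds 1)} := by
    rintro t ⟨htU, htF, htd⟩ hT
    have hd : HasDerivAt F (deriv F t) t := (hF t htU).hasDerivAt
    rw [hasDerivAt_iff_tendsto_slope] at hd
    have hne : ∀ᶠ s in nhdsWithin t {t}ᶜ, slope F t s ≠ 0 := hd.eventually_ne htd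
    rw [eventually_nhdsWithin_iff, Metric.eventually_nhds_iff] at hne
    obtain ⟨ε, εpos, hball⟩ := hne
    have hsmall : ∀ r ∈ Ioo (0:ℝ) ε,
        (fun r => volume (F ⁻¹' {0} ∩ closedBall t r) / volume (closedBall t r)) r = 0 := by
      intro r hr
      have hsub : F ⁻¹' {0} ∩ closedBall t r ⊆ {t} := by
        intro s ⟨hs1, hs2⟩
        by_contra hst
        have hdist : dist s t < ε := lt_of_le_of_lt (mem_closedBall.mp hs2) hr.2
        have := hball hdist hst
        apply this
        have : F s = 0 := hs1
        simp [slope, this, htF]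
      have : volume (F ⁻¹' {0} ∩ closedBall t r) = 0 :=
        le_antisymm (le_trans (measure_mono hsub) (by simp)) (zero_le)
      simp [this]
    have hT0 : Tendsto
        (fun r => volume (F ⁻¹' {0} ∩ closedBall t r) / volume (closedBall t r))
        (nhdsWithin 0 (Ioi 0)) (nhds 0) := by
      apply Tendsto.congr' _ tendsto_const_nhds
      filter_upwards [Ioo_mem_nhdsGT_of_mem (Set.mem_Ico.mpr ⟨le_refl 0, εpos⟩)] with r hr
      exact (hsmall r hr).symm
    exact one_ne_zero (tendsto_nhds_unique hT hT0)
  have : volume B = volume.restrict (F ⁻¹' {0}) B := by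
    rw [Measure.restrict_apply' hZ]
    congr 1
    exact (inter_eq_left.mpr hBZ).symm
  rw [this]
  exact measure_mono_null hBbad hbes

/-- For an arclength-parametrised rotationally symmetric profile `(R, L)`
with `L'(0⁺) = 0`, if `b₁₁ ∈ L¹(0,T)`, `(b₂₂/R)' = R'·b₁₁` everywhere on `(0,T)`, and the
linearised Gauss equation `b₁₁ R L' = (L'R'' − R'L'') b₂₂` holds a.e., then
`(R'L'' − L'R'') b₁₁ + L' b₂₂ / R³ = 0` a.e. on `(0,T)`. -/
theorem rot_symmetric_stationarity_core
    (T : ℝ) (hT : 0 < T) (R L : ℝ → ℝ)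
    (hR1 : ∀ t ∈ Ioo 0 T, DifferentiableAt ℝ R t)
    (hR2 : ∀ t ∈ Ioo 0 T, DifferentiableAt ℝ (deriv R) t)
    (hL1 : ∀ t ∈ Ioo 0 T, DifferentiableAt ℝ L t)
    (hL2 : ∀ t ∈ Ioo 0 T, DifferentiableAt ℝ (deriv L) t)
    (hRpos : ∀ t ∈ Ioo 0 T, 0 < R t)
    (harc : ∀ t ∈ Ioo 0 T, (deriv R t) ^ 2 + (deriv L t) ^ 2 = 1)
    (hL0 : Tendsto (deriv L) (nhdsWithin 0 (Ioi 0)) (nhds 0))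
    (b11 b22 : ℝ → ℝ)
    (hb11 : IntegrableOn b11 (Ioo 0 T))
    (hb22 : ∀ t ∈ Ioo 0 T,
      HasDerivAt (fun s => b22 s / R s) (deriv R t * b11 t) t)
    (hGauss : ∀ᵐ t ∂(volume.restrict (Ioo 0 T)),
      b11 t * R t * deriv L t
        = (deriv L t * deriv (deriv R) t - deriv R t * deriv (deriv L) t) * b22 t) :
    ∀ᵐ t ∂(volume.restrict (Ioo 0 T)),
      (deriv R t * deriv (deriv L) t - deriv L t * deriv (deriv R) t) * b11 t
        + deriv L t * b22 t / (R t) ^ 3 = 0 := by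
  set f : ℝ → ℝ := fun s => b22 s / R s with hfdef
  set g : ℝ → ℝ := fun s => deriv L s * f s with hgdef
  set φ : ℝ → ℝ := fun s =>
    deriv (deriv L) s * f s + deriv L s * (deriv R s * b11 s) with hφdef
  -- derivative of g
  have hgd : ∀ t ∈ Ioo 0 T, HasDerivAt g (φ t) t := fun t ht =>
    ((hL2 t ht).hasDerivAt).mul (hb22 t ht)
  -- |R'| ≤ 1 on (0,T)
  have habsR : ∀ t ∈ Ioo 0 T, |deriv R t| ≤ 1 := by
    intro t ht
    nlinarith [harc t ht, sq_nonneg (deriv L t), sq_abs (deriv R t), abs_nonneg (deriv R t)]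
  -- differentiated arclength relation
  have harc' : ∀ t ∈ Ioo 0 T,
      deriv R t * deriv (deriv R) t + deriv L t * deriv (deriv L) t = 0 := by
    intro t ht
    have h1 : HasDerivAt (fun s => (deriv R s) ^ 2 + (deriv L s) ^ 2)
        (2 * deriv R t ^ 1 * deriv (deriv R) t + 2 * deriv L t ^ 1 * deriv (deriv L) t) t := by
      exact ((hR2 t ht).hasDerivAt.pow 2).add ((hL2 t ht).hasDerivAt.pow 2)
    have h2 : (fun s => (deriv R s) ^ 2 + (deriv L s) ^ 2) =ᶠ[nhds t] fun _ => (1:ℝ) := by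
      filter_upwards [isOpen_Ioo.mem_nhds ht] with s hs using harc s hs
    have h3 := h1.congr_of_eventuallyEq h2.symm
    have h4 := h3.unique (hasDerivAt_const t (1:ℝ))
    nlinarith [h4]
  -- φ = 0 a.e. on (0,T)
  have hφ0 : ∀ᵐ t ∂(volume.restrict (Ioo 0 T)), φ t = 0 := by
    filter_upwards [hGauss, ae_restrict_mem measurableSet_Ioo] with t hG ht
    have hR0 : R t ≠ 0 := (hRpos t ht).ne'
    have hb22t : b22 t = f t * R t := by
      simp only [hfdef]
      field_simp
    have e_g : b11 t * deriv L t
        = (deriv L t * deriv (deriv R) t - deriv R t * deriv (deriv L) t) * f t := by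
      apply mul_right_cancel₀ hR0
      calc b11 t * deriv L t * R t = b11 t * R t * deriv L t := by ring
        _ = (deriv L t * deriv (deriv R) t - deriv R t * deriv (deriv L) t) * b22 t := hG
        _ = (deriv L t * deriv (deriv R) t - deriv R t * deriv (deriv L) t) * f t * R t := by
            rw [hb22t]; ring
    have e_arc := harc t ht
    have e_d := harc' t ht
    simp only [hφdef]
    linear_combination deriv R t * e_g + f t * deriv L t * e_d
      - f t * deriv (deriv L) t * e_arc
  have hφae : ∀ᵐ t ∂(volume : Measure ℝ), t ∈ Ioo 0 T → φ t = 0 :=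
    (ae_restrict_iff' measurableSet_Ioo).mp hφ0
  -- g is constant on (0,T)
  have hgconst : ∀ s ∈ Ioo 0 T, ∀ t ∈ Ioo 0 T, g t = g s := by
    intro s hs t ht
    have huIcc : uIcc s t ⊆ Ioo 0 T := Set.ordConnected_Ioo.uIcc_subset hs ht
    have huIoc : Ι s t ⊆ Ioo 0 T := Set.uIoc_subset_uIcc.trans huIcc
    have hint : IntervalIntegrable φ volume s t := by
      rw [intervalIntegrable_iff]
      have hcong : φ =ᵐ[volume.restrict (Ι s t)] (fun _ => (0:ℝ)) := by
        filter_upwards [ae_restrict_of_ae hφae, ae_restrict_mem measurableSet_uIoc]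
          with u hu1 hu2
        exact hu1 (huIoc hu2)
      exact (integrable_zero _ _ _).congr hcong.symm
    have hFTC := intervalIntegral.integral_eq_sub_of_hasDerivAt
      (fun u hu => hgd u (huIcc hu)) hint
    have hzero : (∫ u in s..t, φ u) = 0 := by
      rw [intervalIntegral.integral_congr_ae
        (g := fun _ => (0:ℝ)) ?_, intervalIntegral.integral_zero]
      filter_upwards [hφae] with u hu huI
      exact hu (huIoc huI)
    rw [hzero] at hFTC
    linarith [hFTC]
  -- bound on f near 0
  set t₀ : ℝ := T / 2 with ht₀def
  have ht₀ : t₀ ∈ Ioo 0 T := ⟨by linarith, by linarith⟩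
  set Bnd : ℝ := ∫ u in Ioo 0 T, |b11 u| with hBnddef
  have hfbdd : ∀ t ∈ Ioo 0 T, |f t| ≤ |f t₀| + Bnd := by
    intro t ht
    have huIcc : uIcc t₀ t ⊆ Ioo 0 T := Set.ordConnected_Ioo.uIcc_subset ht₀ ht
    have huIoc : Ι t₀ t ⊆ Ioo 0 T := Set.uIoc_subset_uIcc.trans huIcc
    have hintOn : IntegrableOn (fun u => deriv R u * b11 u) (Ι t₀ t) := by
      apply Integrable.bdd_mul (c := 1) (hb11.mono_set huIoc)
        ((measurable_deriv R).aestronglyMeasurable)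
      filter_upwards [ae_restrict_mem measurableSet_uIoc] with u hu
      rw [Real.norm_eq_abs]
      exact habsR u (huIoc hu)
    have hint : IntervalIntegrable (fun u => deriv R u * b11 u) volume t₀ t := by
      rwa [intervalIntegrable_iff]
    have hFTC := intervalIntegral.integral_eq_sub_of_hasDerivAt
      (f := f) (fun u hu => hb22 u (huIcc hu)) hint
    have hb11abs : IntegrableOn (fun u => |b11 u|) (Ioo 0 T) := hb11.abs
    have hbound : ‖∫ u in t₀..t, deriv R u * b11 u‖ ≤ Bnd := by
      refine le_trans (intervalIntegral.norm_integral_le_integral_norm_uIoc) ?_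
      have h1 : ∫ u in Ι t₀ t, ‖deriv R u * b11 u‖ ≤ ∫ u in Ι t₀ t, |b11 u| := by
        apply setIntegral_mono_on hintOn.norm (hb11abs.mono_set huIoc)
          measurableSet_uIoc
        intro u hu
        rw [Real.norm_eq_abs, abs_mul]
        calc |deriv R u| * |b11 u| ≤ 1 * |b11 u| :=
              mul_le_mul_of_nonneg_right (habsR u (huIoc hu)) (abs_nonneg _)
          _ = |b11 u| := one_mul _
      refine h1.trans ?_
      exact setIntegral_mono_set hb11abs
        (Filter.Eventually.of_forall fun u => abs_nonneg _)
        (HasSubset.Subset.eventuallyLE huIoc)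
    calc |f t| = |f t₀ + (f t - f t₀)| := by ring_nf
      _ ≤ |f t₀| + |f t - f t₀| := abs_add_le _ _
      _ ≤ |f t₀| + Bnd := by
          rw [← hFTC]
          exact add_le_add_right (by simpa [Real.norm_eq_abs] using hbound) _
  -- g ≡ 0 on (0,T)
  have hIooMem : Ioo (0:ℝ) T ∈ nhdsWithin (0:ℝ) (Ioi 0) :=
    Ioo_mem_nhdsGT_of_mem (Set.mem_Ico.mpr ⟨le_refl 0, hT⟩)
  have hg0 : ∀ t ∈ Ioo 0 T, g t = 0 := by
    have h1 : Tendsto g (nhdsWithin 0 (Ioi 0)) (nhds 0) := by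
      apply squeeze_zero_norm' (a := fun t => |deriv L t| * (|f t₀| + Bnd))
      · filter_upwards [hIooMem] with t ht
        simp only [hgdef, Real.norm_eq_abs, abs_mul]
        refine mul_le_mul_of_nonneg_left (hfbdd t ht) (abs_nonneg _) |>.trans_eq rfl
      · have := (hL0.abs).mul_const (|f t₀| + Bnd)
        simpa using this
    have h2 : Tendsto g (nhdsWithin 0 (Ioi 0)) (nhds (g t₀)) := by
      apply Tendsto.congr' _ (tendsto_const_nhds (α := ℝ))
      filter_upwards [hIooMem] with t ht
      exact (hgconst t₀ ht₀ t ht).symm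
    have hc : g t₀ = 0 := tendsto_nhds_unique h2 h1
    intro t ht
    rw [hgconst t₀ ht₀ t ht, hc]
  -- level-set fact for deriv L
  have hlevel : volume {t | t ∈ Ioo 0 T ∧ deriv L t = 0 ∧ deriv (deriv L) t ≠ 0} = 0 :=
    levelset_null hL2 (measurable_deriv L)
  have hlevel' : ∀ᵐ t ∂(volume.restrict (Ioo 0 T)),
      ¬(t ∈ Ioo 0 T ∧ deriv L t = 0 ∧ deriv (deriv L) t ≠ 0) := by
    apply ae_restrict_of_ae
    rw [ae_iff]
    refine measure_mono_null ?_ hlevel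
    intro x hx
    simp only [Set.mem_setOf_eq, not_not] at hx ⊢
    exact hx
  -- final assembly
  filter_upwards [hGauss, hlevel', ae_restrict_mem measurableSet_Ioo] with t hG hlev ht
  have hR0 : R t ≠ 0 := (hRpos t ht).ne'
  by_cases hL't : deriv L t = 0
  · have hL''t : deriv (deriv L) t = 0 := by
      by_contra hc
      exact hlev ⟨ht, hL't, hc⟩
    rw [hL't, hL''t]
    ring
  · have hf0 : f t = 0 := by
      have := hg0 t ht
      simp only [hgdef] at this
      exact (mul_eq_zero.mp this).resolve_left hL't
    have hb22t : b22 t = 0 := by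
      have : b22 t / R t = 0 := hf0
      field_simp at this
      simpa using this
    have hb11t : b11 t = 0 := by
      have h := hG
      rw [hb22t, mul_zero] at h
      rcases mul_eq_zero.mp h with h' | h'
      · exact (mul_eq_zero.mp h').resolve_right hR0
      · exact absurd h' hL't
    rw [hb11t, hb22t]
    ring
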